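/- Let n be a positive integer, let k, ℓ, m be positive real numbers, and define h : (0, ∞) → ℝ by h(t) = −n t · log(k n t/(2 e π ℓ m)). Set t₀ = 2 π ℓ m/(k n). Let T > 0 and U ∈ (0, 1/4]. If t₀ < T/2 or t₀ > 3T, then for every t ∈ [T(1 − U), T(2 + U)] one has |h'(t)| ≥ n · log(6/5). -/

import Mathlib

open Real Set

/-- Case I of the stationary phase analysis: if the stationary point
`t₀ = 2πℓm/(kn)` of `h(t) = −nt log(knt/(2eπℓm))` satisfies `t₀ < T/2` or `t₀ > 3T`,
then `|h'(t)| ≥ n log(6/5)` for every `t ∈ [T(1 − U), T(2 + U)]`, where `U ∈ (0, 1/4]`. -/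
theorem stmt_6 (n : ℕ) (hn : 0 < n) (k l m : ℝ) (hk : 0 < k) (hl : 0 < l) (hm : 0 < m)
    (h : ℝ → ℝ)
    (hdef : ∀ t : ℝ, h t = -(n : ℝ) * t * Real.log (k * n * t / (2 * Real.exp 1 * Real.pi * l * m)))
    (T U : ℝ) (hT : 0 < T) (hU : U ∈ Set.Ioc (0 : ℝ) (1/4))
    (hcase : 2 * Real.pi * l * m / (k * n) < T / 2 ∨ 2 * Real.pi * l * m / (k * n) > 3 * T) :
    ∀ t ∈ Set.Icc (T * (1 - U)) (T * (2 + U)), (n : ℝ) * Real.log (6/5) ≤ |deriv h t| := by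
  have hfun : h = fun t => -(n : ℝ) * t *
      Real.log (k * n * t / (2 * Real.exp 1 * Real.pi * l * m)) := funext hdef
  subst hfun
  obtain ⟨hU0, hU4⟩ := hU
  intro t ht
  obtain ⟨ht1, ht2⟩ := ht
  have hnpos : (0:ℝ) < n := Nat.cast_pos.mpr hn
  have hpi := Real.pi_pos
  have hepos := Real.exp_pos 1
  have htpos : 0 < t := by nlinarith
  set t0 := 2 * Real.pi * l * m / (k * n) with ht0
  have ht0pos : 0 < t0 := by positivity
  have harg : 0 < k * n * t / (2 * Real.exp 1 * Real.pi * l * m) := by positivity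
  have key : k * n * t / (2 * Real.exp 1 * Real.pi * l * m) = t / (Real.exp 1 * t0) := by
    rw [ht0]; field_simp
  have hlog : Real.log (k * n * t / (2 * Real.exp 1 * Real.pi * l * m))
      = Real.log t - Real.log t0 - 1 := by
    rw [key, Real.log_div (ne_of_gt htpos) (by positivity),
      Real.log_mul (ne_of_gt hepos) (ne_of_gt ht0pos), Real.log_exp]
    ring
  have h1 : HasDerivAt (fun t : ℝ => k * n * t / (2 * Real.exp 1 * Real.pi * l * m))
      (k * n / (2 * Real.exp 1 * Real.pi * l * m)) t := by
    simpa using ((hasDerivAt_id t).const_mul (k * (n:ℝ))).div_const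
      (2 * Real.exp 1 * Real.pi * l * m)
  have h2 := h1.log (ne_of_gt harg)
  have h3 := ((hasDerivAt_id t).const_mul (-(n:ℝ))).mul h2
  have hd : HasDerivAt (fun t => -(n : ℝ) * t *
      Real.log (k * n * t / (2 * Real.exp 1 * Real.pi * l * m)))
      (-(n:ℝ) * (Real.log t - Real.log t0)) t := by
    refine h3.congr_deriv ?_
    rw [hlog, id]
    have hne : k * (n:ℝ) * t ≠ 0 := by positivity
    have hDne : (2 * Real.exp 1 * Real.pi * l * m) ≠ 0 := by positivity
    field_simp
    ring
  rw [hd.deriv, abs_mul, abs_neg, abs_of_nonneg hnpos.le]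
  have hfinal : Real.log (6/5) ≤ |Real.log t - Real.log t0| := by
    rcases hcase with hc | hc
    · have h65 : (6/5 : ℝ) ≤ t / t0 := by
        rw [le_div_iff₀ ht0pos]
        nlinarith [mul_le_mul_of_nonneg_left hU4 hT.le]
      have := Real.log_le_log (by norm_num) h65
      rw [Real.log_div (ne_of_gt htpos) (ne_of_gt ht0pos)] at this
      exact this.trans (le_abs_self _)
    · have h65 : (6/5 : ℝ) ≤ t0 / t := by
        rw [le_div_iff₀ htpos]
        nlinarith [mul_le_mul_of_nonneg_left hU4 hT.le]
      have := Real.log_le_log (by norm_num) h65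
      rw [Real.log_div (ne_of_gt ht0pos) (ne_of_gt htpos)] at this
      calc Real.log (6/5) ≤ Real.log t0 - Real.log t := this
        _ ≤ |Real.log t - Real.log t0| := by rw [abs_sub_comm]; exact le_abs_self _
  exact mul_le_mul_of_nonneg_left hfinal hnpos.le
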